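/- Let α = (5−√5)/10 and let w(n) = ⌊(n+1)α⌋ − ⌊nα⌋ for n ∈ ℕ. Then for every n ≥ 0, d_1(n) = w(n+1), where d_1(n) is the digit of φ^1 in the canonical φ-representation of n. -/

import Mathlib

/-- The golden ratio φ = (1+√5)/2. -/
noncomputable def phi : ℝ := (1 + Real.sqrt 5) / 2

/-- `a` is a finite φ-representation of the real number `x`: a finitely supported
function `a : ℤ → {0,1}` with `x = Σ_{i ∈ ℤ} a(i) · φ^i`. -/
def IsPhiRep (x : ℝ) (a : ℤ →₀ ℕ) : Prop :=
  (∀ i, a i ≤ 1) ∧ x = ∑ i ∈ a.support, (a i : ℝ) * phi ^ i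

/-- `a` is the canonical φ-representation of `x`: a finite φ-representation with
no two adjacent digits equal to 1. -/
def IsCanonRep (x : ℝ) (a : ℤ →₀ ℕ) : Prop :=
  IsPhiRep x a ∧ ∀ i : ℤ, a i * a (i + 1) = 0

/-- α = (5 - √5)/10. -/
noncomputable def alpha : ℝ := (5 - Real.sqrt 5) / 10

/-- The Sturmian word based on α: `w(n) = ⌊(n+1)α⌋ - ⌊nα⌋`. -/
noncomputable def sturmianW (n : ℕ) : ℤ :=
  ⌊((n : ℝ) + 1) * alpha⌋ - ⌊(n : ℝ) * alpha⌋

noncomputable def psi : ℝ := (1 - Real.sqrt 5) / 2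

lemma s5_sq : Real.sqrt 5 ^ 2 = 5 := Real.sq_sqrt (by norm_num)

lemma s5_pos : (0:ℝ) < Real.sqrt 5 := Real.sqrt_pos.2 (by norm_num)

lemma s5_lb : (2.2360:ℝ) < Real.sqrt 5 := by
  have := s5_sq
  nlinarith [s5_pos]

lemma s5_ub : Real.sqrt 5 < 2.2361 := by
  have := s5_sq
  nlinarith [s5_pos]

lemma phi_sq : phi ^ 2 = phi + 1 := by
  have := s5_sq; unfold phi; ring_nf; nlinarith [s5_sq]

lemma psi_sq : psi ^ 2 = psi + 1 := by
  have := s5_sq; unfold psi; ring_nf; nlinarith [s5_sq]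

lemma phi_psi : phi * psi = -1 := by
  have := s5_sq; unfold phi psi; nlinarith [s5_sq]

lemma phi_add_psi : phi + psi = 1 := by unfold phi psi; ring

lemma phi_pos : (0:ℝ) < phi := by unfold phi; nlinarith [s5_lb]

lemma phi_ne : phi ≠ 0 := ne_of_gt phi_pos

lemma phi_lb : (1.6180:ℝ) < phi := by unfold phi; nlinarith [s5_lb]
lemma phi_ub : phi < 1.6181 := by unfold phi; nlinarith [s5_ub]
lemma psi_lb : (-0.6181:ℝ) < psi := by unfold psi; nlinarith [s5_ub]
lemma psi_ub : psi < -0.6180 := by unfold psi; nlinarith [s5_lb]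
lemma one_le_phi : (1:ℝ) ≤ phi := by nlinarith [phi_lb]

lemma irr5 : Irrational (Real.sqrt 5) := (Nat.prime_five).irrational_sqrt

/-- no integer equals (q + r√5)/2 when r ≠ 0 -/
lemma irr_half_comb (q r : ℤ) (hr : r ≠ 0) (m : ℤ) :
    ((m:ℝ)) ≠ ((q:ℝ) + (r:ℝ) * Real.sqrt 5) / 2 := by
  intro h
  have hs : Real.sqrt 5 = ((2*m - q : ℤ) : ℝ) / ((r:ℤ):ℝ) := by
    have hr' : ((r:ℤ):ℝ) ≠ 0 := Int.cast_ne_zero.2 hr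
    field_simp at h ⊢
    push_cast
    linarith
  have : Irrational (((2*m - q : ℤ) : ℝ) / ((r:ℤ):ℝ)) := hs ▸ irr5
  have : Irrational ((((2*m-q : ℤ) : ℚ) / ((r : ℤ) : ℚ) : ℚ) : ℝ) := by
    push_cast at this ⊢
    exact this
  exact (Rat.not_irrational _) this

/-- x^2 = x+1 implies x^(j+1) = fib j + fib (j+1) x -/
lemma fib_pow (x : ℝ) (hx : x^2 = x + 1) : ∀ j : ℕ,
    x ^ (j+1) = (Nat.fib j : ℝ) + (Nat.fib (j+1) : ℝ) * x := by
  intro j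
  induction j with
  | zero => simp
  | succ k ih =>
      have : x ^ (k+2) = x ^ (k+1) * x := by ring
      rw [this, ih, Nat.fib_add_two]
      push_cast
      nlinarith [hx]

/-- Tail bound: sum of phi^i over a nonadjacent set bounded above by m -/
lemma tail_lt (T : Finset ℤ) (hadj : ∀ i ∈ T, i + 1 ∉ T) (m : ℤ)
    (hm : ∀ i ∈ T, i ≤ m) : ∑ i ∈ T, phi ^ i < phi ^ (m + 1) := by
  induction T using Finset.strongInductionOn generalizing m with
  | _ T ih =>
  rcases T.eq_empty_or_nonempty with rfl | hne
  · simpa using zpow_pos phi_pos (m+1)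
  · set M := T.max' hne with hM
    have hMem : M ∈ T := T.max'_mem hne
    have hsplit : ∑ i ∈ T.erase M, phi ^ i + phi ^ M = ∑ i ∈ T, phi ^ i :=
      Finset.sum_erase_add T _ hMem
    have herase : ∀ i ∈ T.erase M, i ≤ M - 2 := by
      intro i hi
      have hiT := Finset.mem_of_mem_erase hi
      have hne' := Finset.ne_of_mem_erase hi
      have hle : i ≤ M := Finset.le_max' T i hiT
      by_contra hc
      have : i = M - 1 := by omega
      subst this
      exact hadj _ hiT (by simpa using hMem)
    have hsub : T.erase M ⊂ T := Finset.erase_ssubset hMem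
    have hrec : ∑ i ∈ T.erase M, phi ^ i < phi ^ (M - 2 + 1) :=
      ih _ hsub (fun i hi h1 => hadj i (Finset.mem_of_mem_erase hi) (Finset.mem_of_mem_erase h1)) _ herase
    have hMm : M ≤ m := hm M hMem
    have hid : phi ^ (M - 2 + 1) + phi ^ M = phi ^ (M + 1) := by
      have h1 := zpow_add₀ phi_ne (M-1) 2
      have h2 := zpow_add₀ phi_ne (M-1) 1
      simp only [zpow_one] at h2
      have e1 : M - 1 + 2 = M + 1 := by ring
      have e2 : M - 1 + 1 = M := by ring
      have e3 : M - 2 + 1 = M - 1 := by ring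
      rw [e1] at h1; rw [e2] at h2
      have h4 : phi ^ (2:ℤ) = phi + 1 := by
        rw [show (2:ℤ) = ((2:ℕ):ℤ) by norm_num, zpow_natCast, phi_sq]
      rw [e3, h1, h2, h4]; ring
    calc ∑ i ∈ T, phi ^ i = ∑ i ∈ T.erase M, phi ^ i + phi ^ M := hsplit.symm
      _ < phi ^ (M - 2 + 1) + phi ^ M := by linarith
      _ = phi ^ (M + 1) := hid
      _ ≤ phi ^ (m + 1) := zpow_le_zpow_right₀ one_le_phi (by omega)

lemma tail_nonneg (T : Finset ℤ) : 0 ≤ ∑ i ∈ T, phi ^ i :=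
  Finset.sum_nonneg fun i _ => le_of_lt (zpow_pos phi_pos i)

lemma psi_eq_neg_inv : psi = -phi⁻¹ := by
  field_simp [phi_ne]
  linear_combination phi_psi

lemma psi_zpow_even {i : ℤ} (h : Even i) : psi ^ i = phi ^ (-i) := by
  rw [psi_eq_neg_inv, show -phi⁻¹ = (-1) * phi⁻¹ by ring, mul_zpow,
    Even.neg_one_zpow h, inv_zpow, ← zpow_neg, one_mul]

lemma psi_zpow_odd {i : ℤ} (h : Odd i) : psi ^ i = -phi ^ (-i) := by
  rw [psi_eq_neg_inv, show -phi⁻¹ = (-1) * phi⁻¹ by ring, mul_zpow,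
    Odd.neg_one_zpow h, inv_zpow, ← zpow_neg]
  ring

/-- generic bound for a one-parity subset -/
lemma parity_sum_bound (Q : Finset ℤ) (hpar : ∀ i ∈ Q, ∀ j ∈ Q, (2 ∣ i - j))
    (mq : ℤ) (hq : ∀ i ∈ Q, mq ≤ i) :
    0 ≤ ∑ i ∈ Q, phi ^ (-i) ∧ ∑ i ∈ Q, phi ^ (-i) < phi ^ (1 - mq) := by
  constructor
  · exact Finset.sum_nonneg fun i _ => le_of_lt (zpow_pos phi_pos _)
  · have himg : ∑ j ∈ Q.image (fun i => -i), phi ^ j = ∑ i ∈ Q, phi ^ (-i) :=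
      Finset.sum_image (by intro x _ y _ h; simp only at h; omega)
    rw [← himg]
    have hb := tail_lt (Q.image (fun i => -i))
      (by
        intro j hj hj1
        simp only [Finset.mem_image] at hj hj1
        obtain ⟨x, hx, rfl⟩ := hj
        obtain ⟨y, hy, hxy⟩ := hj1
        have := hpar x hx y hy
        omega)
      (-mq)
      (by
        intro j hj
        simp only [Finset.mem_image] at hj
        obtain ⟨x, hx, rfl⟩ := hj
        have := hq x hx
        omega)
    calc ∑ j ∈ Q.image (fun i => -i), phi ^ j < phi ^ (-mq + 1) := hb
      _ = phi ^ (1 - mq) := by ring_nf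

lemma psi_head_bounds (P : Finset ℤ) (me mo : ℤ)
    (hPe : ∀ i ∈ P, Even i → me ≤ i) (hPo : ∀ i ∈ P, Odd i → mo ≤ i) :
    -phi ^ (1 - mo) < ∑ i ∈ P, psi ^ i ∧ ∑ i ∈ P, psi ^ i < phi ^ (1 - me) := by
  classical
  have hsplit := Finset.sum_filter_add_sum_filter_not P (fun i => Even i) (fun i => psi ^ i)
  have hE : ∑ i ∈ P.filter (fun i => Even i), psi ^ i
      = ∑ i ∈ P.filter (fun i => Even i), phi ^ (-i) := by
    apply Finset.sum_congr rfl
    intro i hi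
    exact psi_zpow_even (Finset.mem_filter.1 hi).2
  have hO : ∑ i ∈ P.filter (fun i => ¬ Even i), psi ^ i
      = -∑ i ∈ P.filter (fun i => ¬ Even i), phi ^ (-i) := by
    rw [← Finset.sum_neg_distrib]
    apply Finset.sum_congr rfl
    intro i hi
    exact psi_zpow_odd (Int.not_even_iff_odd.1 (Finset.mem_filter.1 hi).2)
  have hEb := parity_sum_bound (P.filter (fun i => Even i))
    (by intro i hi j hj
        have h1 := (Finset.mem_filter.1 hi).2
        have h2 := (Finset.mem_filter.1 hj).2
        rcases h1 with ⟨a, ha⟩; rcases h2 with ⟨b, hb⟩; omega)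
    me
    (by intro i hi
        exact hPe i (Finset.mem_filter.1 hi).1 (Finset.mem_filter.1 hi).2)
  have hOb := parity_sum_bound (P.filter (fun i => ¬ Even i))
    (by intro i hi j hj
        have h1 := Int.not_even_iff_odd.1 (Finset.mem_filter.1 hi).2
        have h2 := Int.not_even_iff_odd.1 (Finset.mem_filter.1 hj).2
        rcases h1 with ⟨a, ha⟩; rcases h2 with ⟨b, hb⟩; omega)
    mo
    (by intro i hi
        exact hPo i (Finset.mem_filter.1 hi).1
          (Int.not_even_iff_odd.1 (Finset.mem_filter.1 hi).2))
  constructor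
  · calc -phi ^ (1 - mo) < -∑ i ∈ P.filter (fun i => ¬ Even i), phi ^ (-i) := by
          linarith [hOb.2]
      _ ≤ ∑ i ∈ P.filter (fun i => Even i), phi ^ (-i)
          + -∑ i ∈ P.filter (fun i => ¬ Even i), phi ^ (-i) := by linarith [hEb.1]
      _ = ∑ i ∈ P, psi ^ i := by rw [← hE, ← hO]; exact hsplit
  · calc ∑ i ∈ P, psi ^ i
        = ∑ i ∈ P.filter (fun i => Even i), phi ^ (-i)
          + -∑ i ∈ P.filter (fun i => ¬ Even i), phi ^ (-i) := by rw [← hE, ← hO]; exact hsplit.symm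
      _ ≤ ∑ i ∈ P.filter (fun i => Even i), phi ^ (-i) := by linarith [hOb.1]
      _ < phi ^ (1 - me) := hEb.2

lemma zpow_two' : phi ^ (2:ℤ) = phi + 1 := by
  rw [show (2:ℤ) = ((2:ℕ):ℤ) by norm_num, zpow_natCast, phi_sq]

lemma phi_zm1 : phi ^ (-1:ℤ) = -psi := by
  rw [zpow_neg, zpow_one]
  rw [inv_eq_of_mul_eq_one_right (a := phi) (b := -psi) (by linear_combination -phi_psi)]

lemma phi_zm2 : phi ^ (-2:ℤ) = 1 + psi := by
  rw [zpow_neg, zpow_two']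
  rw [inv_eq_of_mul_eq_one_right (a := phi + 1) (b := 1 + psi)
    (by linear_combination phi_add_psi + phi_psi)]

lemma phi_zm3 : phi ^ (-3:ℤ) = -(2*psi + 1) := by
  have h3 : phi ^ (3:ℤ) = 2*phi + 1 := by
    rw [show (3:ℤ) = ((3:ℕ):ℤ) by norm_num, zpow_natCast, pow_succ, phi_sq]
    nlinarith [phi_sq]
  rw [zpow_neg, h3]
  rw [inv_eq_of_mul_eq_one_right (a := 2*phi + 1) (b := -(2*psi+1)) (by
    linear_combination -4*phi_psi - 2*phi_add_psi)]

/-- pointwise head identities -/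
lemma phi_zpow_fib {i : ℤ} (hi : 1 ≤ i) :
    phi ^ i = (Nat.fib ((i-1).toNat) : ℝ) + (Nat.fib (i.toNat) : ℝ) * phi := by
  have h1 : i = ((i.toNat : ℕ) : ℤ) := by omega
  have h2 : i.toNat = (i-1).toNat + 1 := by omega
  conv_lhs => rw [h1]
  rw [zpow_natCast, h2, fib_pow phi phi_sq]

lemma psi_zpow_fib {i : ℤ} (hi : 1 ≤ i) :
    psi ^ i = (Nat.fib ((i-1).toNat) : ℝ) + (Nat.fib (i.toNat) : ℝ) * psi := by
  have h1 : i = ((i.toNat : ℕ) : ℤ) := by omega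
  have h2 : i.toNat = (i-1).toNat + 1 := by omega
  conv_lhs => rw [h1]
  rw [zpow_natCast, h2, fib_pow psi psi_sq]

lemma rep_point (a : ℤ →₀ ℕ) (n : ℕ) (hle : ∀ i, a i ≤ 1)
    (hsum : (n:ℝ) = ∑ i ∈ a.support, (a i : ℝ) * phi ^ i)
    (hadj : ∀ i : ℤ, a i * a (i+1) = 0) :
    ∃ t s : ℤ,
      (t:ℝ) + s * phi ≤ n ∧
      (a 1 = 1 → ((n:ℝ) - 1 < t + s * phi ∧ -1 < (t:ℝ) + s * psi ∧ (t:ℝ) + s * psi < -(1+psi))) ∧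
      (a 1 = 0 → ((n:ℝ) - phi < t + s * phi ∧ -(1+psi) < (t:ℝ) + s * psi ∧ (t:ℝ) + s * psi < -psi)) := by
  classical
  set S := a.support with hS
  have hmem : ∀ i, i ∈ S ↔ a i ≠ 0 := fun i => Finsupp.mem_support_iff
  have hSadj : ∀ i ∈ S, i + 1 ∉ S := by
    intro i hi hi1
    have h1 := (hmem i).1 hi
    have h2 := (hmem (i+1)).1 hi1
    rcases Nat.mul_eq_zero.1 (hadj i) with h | h
    · exact h1 h
    · exact h2 h
  have hsum' : (n:ℝ) = ∑ i ∈ S, phi ^ i := by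
    rw [hsum]
    apply Finset.sum_congr rfl
    intro i hi
    have h1 := (hmem i).1 hi
    have h2 := hle i
    have : a i = 1 := by omega
    rw [this]; push_cast; ring
  set P := S.filter (fun i => 1 ≤ i) with hP
  set T := S.filter (fun i => ¬ (1 ≤ i)) with hT
  have hsplit : ∑ i ∈ P, phi ^ i + ∑ i ∈ T, phi ^ i = ∑ i ∈ S, phi ^ i :=
    Finset.sum_filter_add_sum_filter_not S _ _
  set t : ℤ := ∑ i ∈ P, (Nat.fib ((i-1).toNat) : ℤ) with ht
  set s : ℤ := ∑ i ∈ P, (Nat.fib (i.toNat) : ℤ) with hs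
  have hPhead : ∑ i ∈ P, phi ^ i = (t:ℝ) + s * phi := by
    rw [ht, hs]
    push_cast
    rw [Finset.sum_mul, ← Finset.sum_add_distrib]
    apply Finset.sum_congr rfl
    intro i hi
    exact phi_zpow_fib (Finset.mem_filter.1 hi).2
  have hPheadPsi : ∑ i ∈ P, psi ^ i = (t:ℝ) + s * psi := by
    rw [ht, hs]
    push_cast
    rw [Finset.sum_mul, ← Finset.sum_add_distrib]
    apply Finset.sum_congr rfl
    intro i hi
    exact psi_zpow_fib (Finset.mem_filter.1 hi).2
  have hTadj : ∀ i ∈ T, i + 1 ∉ T := by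
    intro i hi hi1
    exact hSadj i (Finset.mem_filter.1 hi).1 (Finset.mem_filter.1 hi1).1
  have hTnn : (0:ℝ) ≤ ∑ i ∈ T, phi ^ i := tail_nonneg T
  have hxn : (t:ℝ) + s * phi ≤ n := by
    rw [← hPhead] at *
    linarith [hsum' ▸ hsplit]
  refine ⟨t, s, hxn, ?_, ?_⟩
  · -- a 1 = 1 case
    intro h1
    have h1S : (1:ℤ) ∈ S := (hmem 1).2 (by omega)
    have h0S : (0:ℤ) ∉ S := by
      intro h0
      exact hSadj 0 h0 (by simpa using h1S)
    have h2S : (2:ℤ) ∉ S := hSadj 1 h1S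
    -- tail bound : p < 1
    have hTb : ∑ i ∈ T, phi ^ i < 1 := by
      have := tail_lt T hTadj (-1) (by
        intro i hi
        have hiS := (Finset.mem_filter.1 hi).1
        have hile := (Finset.mem_filter.1 hi).2
        have : i ≠ 0 := fun h => h0S (h ▸ hiS)
        omega)
      calc ∑ i ∈ T, phi ^ i < phi ^ ((-1) + 1 : ℤ) := this
        _ = 1 := by norm_num
    have hx1 : (n:ℝ) - 1 < t + s * phi := by
      have := hsum' ▸ hsplit
      rw [hPhead] at this
      linarith
    -- head psi bounds
    have h1P : (1:ℤ) ∈ P := Finset.mem_filter.2 ⟨h1S, by norm_num⟩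
    have hesplit : ∑ i ∈ P.erase 1, psi ^ i + psi ^ (1:ℤ) = ∑ i ∈ P, psi ^ i :=
      Finset.sum_erase_add P _ h1P
    have hHB := psi_head_bounds (P.erase 1) 4 3
      (by
        intro i hi he
        have hiP := Finset.mem_of_mem_erase hi
        have hi1 : i ≠ 1 := Finset.ne_of_mem_erase hi
        have hige := (Finset.mem_filter.1 hiP).2
        have hi2 : i ≠ 2 := by
          intro h
          exact h2S (h ▸ (Finset.mem_filter.1 hiP).1)
        have hi3 : i ≠ 3 := by
          intro h
          rcases he with ⟨b, hb⟩
          omega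
        omega)
      (by
        intro i hi ho
        have hiP := Finset.mem_of_mem_erase hi
        have hi1 : i ≠ 1 := Finset.ne_of_mem_erase hi
        have hige := (Finset.mem_filter.1 hiP).2
        have hi2 : i ≠ 2 := by
          rcases ho with ⟨b, hb⟩
          omega
        omega)
    rw [show (1:ℤ) - 3 = -2 by norm_num, show (1:ℤ) - 4 = -3 by norm_num,
      phi_zm2, phi_zm3] at hHB
    have hy : (t:ℝ) + s * psi = ∑ i ∈ P.erase 1, psi ^ i + psi := by
      rw [← hPheadPsi, ← hesplit, zpow_one]
    constructor
    · exact hx1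
    constructor
    · rw [hy]; linarith [hHB.1]
    · rw [hy]; linarith [hHB.2]
  · -- a 1 = 0 case
    intro h1
    have h1S : (1:ℤ) ∉ S := by
      intro h
      exact ((hmem 1).1 h) (by omega)
    have hTb : ∑ i ∈ T, phi ^ i < phi := by
      have := tail_lt T hTadj 0 (by
        intro i hi
        have := (Finset.mem_filter.1 hi).2
        omega)
      calc ∑ i ∈ T, phi ^ i < phi ^ ((0:ℤ) + 1) := this
        _ = phi := by norm_num
    have hx1 : (n:ℝ) - phi < t + s * phi := by
      have := hsum' ▸ hsplit
      rw [hPhead] at this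
      linarith
    have hHB := psi_head_bounds P 2 3
      (by
        intro i hi he
        have hige := (Finset.mem_filter.1 hi).2
        have : i ≠ 1 := by
          intro h
          exact h1S (h ▸ (Finset.mem_filter.1 hi).1)
        omega)
      (by
        intro i hi ho
        have hige := (Finset.mem_filter.1 hi).2
        have hi1 : i ≠ 1 := by
          intro h
          exact h1S (h ▸ (Finset.mem_filter.1 hi).1)
        have : i ≠ 2 := by
          rcases ho with ⟨b, hb⟩
          omega
        omega)
    rw [show (1:ℤ) - 3 = -2 by norm_num, show (1:ℤ) - 2 = -1 by norm_num,
      phi_zm2, phi_zm1] at hHB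
    rw [hPheadPsi] at hHB
    exact ⟨hx1, hHB.1, hHB.2⟩

lemma rat_comb_ne (p q : ℤ) (hq : q ≠ 0) : (p:ℝ) + (q:ℝ) * Real.sqrt 5 ≠ 0 := by
  intro h
  have hq' : ((q:ℝ)) ≠ 0 := Int.cast_ne_zero.2 hq
  have hs : Real.sqrt 5 = ((-p : ℚ) : ℝ) / ((q : ℚ) : ℝ) := by
    push_cast
    field_simp
    linarith
  rw [← Rat.cast_div] at hs
  exact (Rat.not_irrational _) (hs ▸ irr5)

lemma alpha_irr_mul (c : ℤ) (hc : c ≠ 0) (m : ℤ) : ((m:ℝ)) ≠ (c:ℝ) * alpha := by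
  intro h
  unfold alpha at h
  have : ((10*m - 5*c : ℤ):ℝ) + ((c : ℤ):ℝ) * Real.sqrt 5 = 0 := by
    push_cast
    linarith
  exact rat_comb_ne _ _ hc this

/-- W1 : if frac((n+1)α) > 1-α, there is a lattice point in box1 -/
lemma W1 (n : ℕ) (k : ℤ) (hk : k = ⌊((n:ℝ)+1) * alpha⌋)
    (hb : (k:ℝ) + 1 - alpha < ((n:ℝ)+1) * alpha) :
    ∃ t s : ℤ, ((n:ℝ) - 1 < t + s*phi ∧ (t:ℝ) + s*phi ≤ n ∧
      -1 < (t:ℝ) + s*psi ∧ (t:ℝ) + s*psi < -(1+psi)) := by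
  have hpsineg : psi < 0 := by nlinarith [psi_ub]
  have hup : ((n:ℝ)+1) * alpha < k + 1 := by rw [hk]; exact Int.lt_floor_add_one _
  have hphi2 : alpha * (phi + 2) = 1 := by unfold alpha phi; nlinarith [s5_sq]
  have hphi2pos : (0:ℝ) < phi + 2 := by nlinarith [phi_lb]
  have n1lb : ((k:ℝ)+1) * (phi + 2) - 1 < (n:ℝ) + 1 := by
    have h1 : ((k:ℝ) + 1 - alpha) * (phi + 2) < ((n:ℝ)+1) * alpha * (phi+2) :=
      mul_lt_mul_of_pos_right hb hphi2pos
    rw [mul_assoc, hphi2, mul_one] at h1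
    nlinarith [h1, hphi2]
  have n1ub : (n:ℝ) + 1 < ((k:ℝ)+1) * (phi + 2) := by
    have h1 : ((n:ℝ)+1) * alpha * (phi+2) < ((k:ℝ) + 1) * (phi + 2) :=
      mul_lt_mul_of_pos_right hup hphi2pos
    rw [mul_assoc, hphi2, mul_one] at h1
    exact h1
  set u : ℝ := ((k:ℝ)+1) * phi with hu
  set m : ℤ := (n:ℤ) - 2*k - 1 with hmdef
  have hmr : ((m:ℝ)) = (n:ℝ) - 2*k - 1 := by rw [hmdef]; push_cast; ring
  have hml : u - 1 < (m:ℝ) := by rw [hmr]; linarith [n1lb]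
  have hmu : (m:ℝ) < u := by rw [hmr]; linarith [n1ub]
  have hups : u * psi = -((k:ℝ)+1) := by
    rw [hu]; linear_combination ((k:ℝ)+1) * phi_psi
  have hylb : -1 < (k:ℝ) + m*psi := by
    have h1 := mul_lt_mul_of_neg_right hmu hpsineg
    nlinarith [h1, hups]
  have hyub : (k:ℝ) + m*psi < -(1+psi) := by
    have h1 := mul_lt_mul_of_neg_right hml hpsineg
    nlinarith [h1, hups]
  have hx : (n:ℝ) - ((k:ℝ) + m*phi) = ((k:ℝ) + m*psi) + 1 := by
    linear_combination (-1 : ℝ) * hmr - (m:ℝ) * phi_add_psi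
  exact ⟨k, m, by linarith [psi_lb], by linarith, hylb, hyub⟩

/-- W0 : if frac((n+1)α) < 1-α, there is a lattice point in box0 -/
lemma W0 (n : ℕ) (k : ℤ) (hk : k = ⌊((n:ℝ)+1) * alpha⌋)
    (hb : ((n:ℝ)+1) * alpha < (k:ℝ) + 1 - alpha) :
    ∃ t s : ℤ, ((n:ℝ) - phi < t + s*phi ∧ (t:ℝ) + s*phi ≤ n ∧
      -(1+psi) < (t:ℝ) + s*psi ∧ (t:ℝ) + s*psi < -psi) := by
  have hpsineg : psi < 0 := by nlinarith [psi_ub]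
  have h2psipos : (0:ℝ) < 2 + psi := by nlinarith [psi_lb]
  have hSa : Real.sqrt 5 * alpha = -psi := by
    unfold alpha psi; linear_combination (-1/10 : ℝ) * s5_sq
  have hS1a : Real.sqrt 5 * (1 - alpha) = phi := by
    unfold alpha phi; linear_combination (1/10 : ℝ) * s5_sq
  have halpsi : (2 + psi) * alpha = 1 + psi := by
    unfold alpha psi; linear_combination (1/20 : ℝ) * s5_sq
  have hexp : (2 + psi) * (1 - alpha) = 1 := by linear_combination -halpsi
  set β : ℝ := ((n:ℝ)+1)*alpha - k with hβdef
  have hβ0 : 0 < β := by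
    have h1 : (k:ℝ) ≤ ((n:ℝ)+1)*alpha := by rw [hk]; exact Int.floor_le _
    have h2 : (k:ℝ) ≠ ((n:ℝ)+1)*alpha := by
      have := alpha_irr_mul ((n:ℤ)+1) (by omega) k
      push_cast at this ⊢
      intro hcon
      exact this (by linarith)
    have : (k:ℝ) < ((n:ℝ)+1)*alpha := lt_of_le_of_ne h1 h2
    simp only [hβdef]
    linarith
  have hβ1 : β < 1 - alpha := by simp only [hβdef]; linarith
  set z : ℝ := ((n:ℝ) - k) * (phi - 1) with hzdef
  set s0 : ℤ := ⌊z⌋ with hs0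
  set ε : ℝ := z - s0 with hεdef
  have hε0 : 0 ≤ ε := by simp only [hεdef, hs0]; linarith [Int.floor_le z]
  have hε1 : ε < 1 := by simp only [hεdef, hs0]; linarith [Int.lt_floor_add_one z]
  have hx : (n:ℝ) - ((k:ℝ) + s0*phi) = phi * ε := by
    simp only [hεdef, hzdef]
    linear_combination ((k:ℝ) - n) * phi_sq
  set J : ℤ := (n:ℤ) - 2*k - 1 - s0 with hJdef
  have hJr : (J:ℝ) = (n:ℝ) - 2*k - 1 - s0 := by rw [hJdef]; push_cast; ring
  have hJid : ε = (2+psi)*(1-β) + (J:ℝ) := by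
    rw [hJr]
    simp only [hεdef, hzdef, hβdef]
    unfold psi alpha phi
    linear_combination (((n:ℝ)+1)/20) * s5_sq
  have hJub : (J:ℝ) < 1 := by
    have hA : (1+psi) < (2+psi)*(1-β) := by nlinarith [hβ1, h2psipos, halpsi]
    nlinarith [hJid, hε1, psi_lb]
  have hJlb : (-2:ℝ) < (J:ℝ) := by
    have hA : (2+psi)*(1-β) < 2+psi := by nlinarith [hβ0, h2psipos]
    nlinarith [hJid, hε0, psi_lb]
  have hJcases : J = 0 ∨ J = -1 := by
    have h1 : (-2:ℤ) < J := by exact_mod_cast hJlb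
    have h2 : J < 1 := by exact_mod_cast hJub
    omega
  have hy : (k:ℝ) + s0*psi = -2*psi - psi*(J:ℝ) - Real.sqrt 5 * β := by
    rw [hJr]
    simp only [hβdef]
    unfold psi alpha
    linear_combination (-((n:ℝ)+1)/10) * s5_sq
  refine ⟨k, s0, ?_, ?_, ?_, ?_⟩
  · have h := mul_lt_mul_of_pos_left hε1 phi_pos
    simp only [mul_one] at h
    linarith [hx, h]
  · have h : 0 ≤ phi * ε := mul_nonneg (le_of_lt phi_pos) hε0
    linarith [hx, h]
  · -- lower bound on y
    rcases hJcases with hJ | hJ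
    · -- J = 0 : need sqrt5 * β < phi
      have hSb : Real.sqrt 5 * β < phi := by
        calc Real.sqrt 5 * β < Real.sqrt 5 * (1 - alpha) :=
              (mul_lt_mul_iff_right₀ s5_pos).2 hβ1
          _ = phi := hS1a
      rw [hy, hJ]
      push_cast
      linarith [hSb, phi_add_psi]
    · -- J = -1 : need sqrt5 * β < 1 via β ≤ alpha
      have hba : β ≤ alpha := by
        have h1 : (1:ℝ) ≤ (2+psi)*(1-β) := by
          rw [hJid, hJ] at hε0
          push_cast at hε0
          linarith
        have h2 : (2+psi)*(1-alpha) ≤ (2+psi)*(1-β) := by linarith [hexp, h1]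
        have h3 := (mul_le_mul_iff_right₀ h2psipos).1 h2
        linarith
      have hSb : Real.sqrt 5 * β ≤ -psi := by
        calc Real.sqrt 5 * β ≤ Real.sqrt 5 * alpha := by nlinarith [hba, s5_pos]
          _ = -psi := hSa
      rw [hy, hJ]
      push_cast
      linarith [hSb, psi_lb]
  · -- upper bound on y
    rcases hJcases with hJ | hJ
    · -- J = 0 : need sqrt5 * β > -psi via β > alpha
      have hba : alpha < β := by
        have h1 : (2+psi)*(1-β) < 1 := by
          rw [hJid, hJ] at hε1
          push_cast at hε1
          linarith
        have h2 : (2+psi)*(1-β) < (2+psi)*(1-alpha) := by linarith [hexp, h1]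
        have h3 := (mul_lt_mul_iff_right₀ h2psipos).1 h2
        linarith
      have hSb : -psi < Real.sqrt 5 * β := by
        calc -psi = Real.sqrt 5 * alpha := hSa.symm
          _ < Real.sqrt 5 * β := (mul_lt_mul_iff_right₀ s5_pos).2 hba
      rw [hy, hJ]
      push_cast
      linarith [hSb]
    · -- J = -1 : need sqrt5 * β > 0
      have hSb : 0 < Real.sqrt 5 * β := mul_pos s5_pos hβ0
      rw [hy, hJ]
      push_cast
      linarith [hSb]

lemma phi_sub_psi : phi - psi = Real.sqrt 5 := by unfold phi psi; ring

/-- a box1 point and a box0 point cannot coexist -/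
lemma boxes_disjoint (N : ℝ) (t s t' s' : ℤ)
    (hx1l : N - 1 < t + s*phi) (hx1u : (t:ℝ) + s*phi ≤ N)
    (hy1l : -1 < (t:ℝ) + s*psi) (hy1u : (t:ℝ) + s*psi < -(1+psi))
    (hx0l : N - phi < t' + s'*phi) (hx0u : (t':ℝ) + s'*phi ≤ N)
    (hy0l : -(1+psi) < (t':ℝ) + s'*psi) (hy0u : (t':ℝ) + s'*psi < -psi) :
    False := by
  have phipos : (0:ℝ) < phi := by linarith [phi_lb]
  have phi_sq : phi ^ 2 = phi + 1 := by
    unfold phi; nlinarith [s5_sq]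
  set A : ℤ := t' - t with hA
  set B : ℤ := s' - s with hB
  set dx : ℝ := (A:ℝ) + B*phi with hdx
  set dy : ℝ := (A:ℝ) + B*psi with hdy
  have hdxval : dx = ((t':ℝ) + s'*phi) - ((t:ℝ) + s*phi) := by
    rw [hdx, hA, hB]; push_cast; ring
  have hdyval : dy = ((t':ℝ) + s'*psi) - ((t:ℝ) + s*psi) := by
    rw [hdy, hA, hB]; push_cast; ring
  have hdxl : -phi < dx := by rw [hdxval]; linarith
  have hdxu : dx < 1 := by rw [hdxval]; linarith
  have hdyl : 0 < dy := by rw [hdyval]; linarith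
  have hdyu : dy < phi := by rw [hdyval]; linarith [phi_add_psi]
  have hBs5 : dx - dy = (B:ℝ) * Real.sqrt 5 := by
    rw [hdx, hdy, ← phi_sub_psi]; ring
  set Nz : ℤ := A^2 + A*B - B^2 with hNz
  have hprod : dx * dy = ((Nz:ℝ)) := by
    rw [hdx, hdy, hNz]
    push_cast
    linear_combination ((A:ℝ)*(B:ℝ)) * phi_add_psi + ((B:ℝ)*(B:ℝ)) * phi_psi
  have hNl : (-3:ℝ) < (Nz:ℝ) := by
    rw [← hprod]
    nlinarith [hdxl, hdxu, hdyl, hdyu, phi_lb, phi_ub]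
  have hNu : ((Nz:ℝ)) < 2 := by
    rw [← hprod]
    nlinarith [hdxl, hdxu, hdyl, hdyu, phi_lb, phi_ub]
  clear_value A B dx dy Nz
  clear hx1l hx1u hy1l hy1u hx0l hx0u hy0l hy0u hdxval hdyval hA hB
  have hNl' : (-3:ℤ) < Nz := by exact_mod_cast hNl
  have hNu' : Nz < 2 := by exact_mod_cast hNu
  interval_cases Nz
  · -- Nz = -2 : impossible mod 5
    have h2 : ((2*A+B)^2 : ℤ) = -8 + 5*B^2 := by linear_combination (4:ℤ) * hNz.symm
    have h4 := congrArg (fun x : ℤ => (x : ZMod 5)) h2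
    push_cast at h4
    exact (by decide : ∀ x y : ZMod 5, (2*x + y)^2 ≠ -8 + 5*y^2) (A : ZMod 5) (B : ZMod 5) h4
  · -- Nz = -1
    have hprod' : dx * dy = -1 := by rw [hprod]; norm_num
    have hdxneg : dx < 0 := by
      by_contra h
      push_neg at h
      linarith [mul_nonneg h hdyl.le, hprod']
    have hdyphim1 : phi - 1 < dy := by
      have hp1 : (0:ℝ) < (dx + phi) * dy := mul_pos (by linarith) hdyl
      by_contra h
      push_neg at h
      have hp2 : phi * dy ≤ phi * (phi - 1) := mul_le_mul_of_nonneg_left h phipos.le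
      linarith [hp1, hprod', phi_sq, hp2]
    have hdxub : dx < 1 - phi := by
      have hp1 : (0:ℝ) < (phi - dy) * (-dx) := mul_pos (by linarith) (by linarith)
      have h2 : phi * (phi - 1) < phi * (-dx) := by linarith [hp1, hprod', phi_sq]
      have h3 := (mul_lt_mul_iff_right₀ phipos).1 h2
      linarith
    have hBub : (B:ℝ) * Real.sqrt 5 < -2*(phi - 1) := by
      rw [← hBs5]; linarith
    have hBlb : -2*phi < (B:ℝ) * Real.sqrt 5 := by
      rw [← hBs5]; linarith
    have hB1 : B < 0 := by
      by_contra h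
      push_neg at h
      have h0 : (0:ℝ) ≤ (B:ℝ) := by exact_mod_cast h
      have : (0:ℝ) ≤ (B:ℝ) * Real.sqrt 5 := mul_nonneg h0 s5_pos.le
      linarith [hBub, phi_lb]
    have hB2 : (-2:ℤ) < B := by
      by_contra h
      push_neg at h
      have h0 : (B:ℝ) ≤ -2 := by exact_mod_cast h
      have : (B:ℝ) * Real.sqrt 5 ≤ -2 * Real.sqrt 5 :=
        mul_le_mul_of_nonneg_right h0 s5_pos.le
      linarith [hBlb, s5_lb, phi_ub, this]
    have hBm1 : B = -1 := by omega
    have hdxA : dx = (A:ℝ) - phi := by rw [hdx, hBm1]; push_cast; ring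
    have hA1 : (0:ℝ) < (A:ℝ) := by rw [hdxA] at hdxl; linarith
    have hA2 : (A:ℝ) < 1 := by rw [hdxA] at hdxub; linarith
    have hA1' : 0 < A := by exact_mod_cast hA1
    have hA2' : A < 1 := by exact_mod_cast hA2
    omega
  · -- Nz = 0
    have hprod' : dx * dy = 0 := by rw [hprod]; norm_num
    have hdx0 : dx = 0 := by
      rcases mul_eq_zero.1 hprod' with h | h
      · exact h
      · exact absurd h (ne_of_gt hdyl)
    have hcomb : ((2*A + B : ℤ):ℝ) + ((B:ℤ):ℝ) * Real.sqrt 5 = 0 := by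
      rw [hdx] at hdx0
      unfold phi at hdx0
      push_cast
      linarith
    by_cases hB0 : B = 0
    · have h6 : ((2*A : ℤ):ℝ) = 0 := by
        rw [hB0] at hcomb
        push_cast at hcomb ⊢
        linarith
      have h7 : (2*A : ℤ) = 0 := by exact_mod_cast h6
      have hA0 : A = 0 := by omega
      rw [hdy, hA0, hB0] at hdyl
      push_cast at hdyl
      linarith
    · exact rat_comb_ne _ _ hB0 hcomb
  · -- Nz = 1
    have hprod' : dx * dy = 1 := by rw [hprod]; norm_num
    have hdxpos : 0 < dx := by
      by_contra h
      push_neg at h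
      linarith [mul_nonneg (neg_nonneg.2 h) hdyl.le, hprod']
    have hdy1 : 1 < dy := by
      linarith [mul_pos (show (0:ℝ) < 1 - dx by linarith) hdyl, hprod']
    have hBub : (B:ℝ) * Real.sqrt 5 < 0 := by rw [← hBs5]; linarith
    have hBlb : -phi < (B:ℝ) * Real.sqrt 5 := by rw [← hBs5]; linarith
    have hB1 : B < 0 := by
      by_contra h
      push_neg at h
      have h0 : (0:ℝ) ≤ (B:ℝ) := by exact_mod_cast h
      have : (0:ℝ) ≤ (B:ℝ) * Real.sqrt 5 := mul_nonneg h0 s5_pos.le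
      linarith
    have hB2 : (-1:ℤ) < B := by
      by_contra h
      push_neg at h
      have h0 : (B:ℝ) ≤ -1 := by exact_mod_cast h
      have : (B:ℝ) * Real.sqrt 5 ≤ -1 * Real.sqrt 5 :=
        mul_le_mul_of_nonneg_right h0 s5_pos.le
      linarith [hBlb, s5_lb, phi_ub, this]
    omega

/-- For `n ≥ 0`, the digit of φ¹ in the canonical φ-representation of `n` equals
`w(n+1)`. Here `d n` denotes the canonical φ-representation of `n`. -/
theorem d1_eq_sturmian
    (d : ℕ → ℤ →₀ ℕ) (hd : ∀ n : ℕ, IsCanonRep n (d n)) (n : ℕ) :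
    (d n 1 : ℤ) = sturmianW (n + 1) := by
  obtain ⟨⟨hle, hsum⟩, hadj⟩ := hd n
  set k : ℤ := ⌊((n:ℝ)+1) * alpha⌋ with hk
  have halb : (0:ℝ) < alpha := by unfold alpha; nlinarith [s5_ub]
  have haub : alpha < 1 := by unfold alpha; nlinarith [s5_lb]
  have hw : sturmianW (n+1) = ⌊((n:ℝ)+2) * alpha⌋ - k := by
    unfold sturmianW
    rw [hk]
    have e1 : (((n+1 : ℕ)):ℝ) + 1 = (n:ℝ) + 2 := by push_cast; ring
    have e2 : (((n+1 : ℕ)):ℝ) = (n:ℝ) + 1 := by push_cast; ring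
    rw [e1, e2]
  obtain ⟨t, s, hxle, hc1, hc0⟩ := rep_point (d n) n hle hsum hadj
  have hfl : (k:ℝ) ≤ ((n:ℝ)+1)*alpha := by rw [hk]; exact Int.floor_le _
  have hfu : ((n:ℝ)+1)*alpha < k+1 := by rw [hk]; exact Int.lt_floor_add_one _
  by_cases hb : ((n:ℝ)+1)*alpha < (k:ℝ) + 1 - alpha
  · -- Sturmian letter is 0
    have hw0 : ⌊((n:ℝ)+2)*alpha⌋ = k := by
      apply Int.floor_eq_iff.2
      constructor
      · nlinarith [hfl, halb]
      · push_cast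
        nlinarith [hb]
    have hd1 : d n 1 = 0 := by
      by_contra hne
      have h1 : d n 1 = 1 := by have := hle 1; omega
      obtain ⟨hx1, hy1l, hy1u⟩ := hc1 h1
      obtain ⟨t', s', h0a, h0b, h0c, h0d⟩ := W0 n k hk hb
      exact boxes_disjoint n t s t' s' hx1 hxle hy1l hy1u h0a h0b h0c h0d
    rw [hd1, hw, hw0]
    simp
  · -- Sturmian letter is 1
    push_neg at hb
    have hbs : (k:ℝ) + 1 - alpha < ((n:ℝ)+1)*alpha := by
      rcases lt_or_eq_of_le hb with h | h
      · exact h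
      · exfalso
        have hcast : ((k+1 : ℤ):ℝ) = (((n:ℤ)+2 : ℤ):ℝ) * alpha := by
          push_cast
          nlinarith [h]
        exact alpha_irr_mul ((n:ℤ)+2) (by omega) (k+1) hcast
    have hw1 : ⌊((n:ℝ)+2)*alpha⌋ = k + 1 := by
      apply Int.floor_eq_iff.2
      constructor
      · push_cast
        nlinarith [hbs]
      · push_cast
        nlinarith [hfu, haub]
    have hd1 : d n 1 = 1 := by
      have hle1 := hle 1
      by_contra hne
      have h0 : d n 1 = 0 := by omega
      obtain ⟨hx0, hy0l, hy0u⟩ := hc0 h0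
      obtain ⟨t', s', h1a, h1b, h1c, h1d⟩ := W1 n k hk hbs
      exact boxes_disjoint n t' s' t s h1a h1b h1c h1d hx0 hxle hy0l hy0u
    rw [hd1, hw, hw1]
    push_cast
    ring
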